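/- Let n ≥ 1 and let g : ℝ^n → ℝ satisfy g(λx + (1−λ)x') = λ g(x) + (1−λ) g(x') for every λ ∈ [0,1] and all comonotonic vectors x, x' ∈ ℝ^n. Then for every permutation π of [n] there exist a ∈ ℝ^n and c ∈ ℝ with g(x) = Σ_{i=1}^n a_i x_i + c for all x ∈ P_π; that is, g is a Lovász extension. -/

import Mathlib

open Finset

/-- The Choquet-type sum computed with a given permutation `π`:
`∑ i (v({π(i),…,π(n)}) − v({π(i+1),…,π(n)})) x_{π(i)}`. -/
noncomputable def choquetSum {n : ℕ} (v : Finset (Fin n) → ℝ) (π : Equiv.Perm (Fin n))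
    (x : Fin n → ℝ) : ℝ :=
  ∑ i : Fin n,
    (v ((Finset.univ.filter fun k => i ≤ k).image π) -
      v ((Finset.univ.filter fun k => i < k).image π)) * x (π i)

/-- The signed (discrete) Choquet integral of `x` w.r.t. the set function `v`,
computed with a sorting permutation of `x`. -/
noncomputable def signedChoquet {n : ℕ} (v : Finset (Fin n) → ℝ) (x : Fin n → ℝ) : ℝ :=
  choquetSum v (Tuple.sort x) x

/-- Two vectors are comonotonic. -/
def Comonotone' {n : ℕ} (x x' : Fin n → ℝ) : Prop :=
  ∀ i j, 0 ≤ (x i - x j) * (x' i - x' j)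

/-- Characteristic (indicator) vector of `S`. -/
def indVec {n : ℕ} (S : Finset (Fin n)) : Fin n → ℝ := fun i => if i ∈ S then 1 else 0

/-- The unanimity game `v_S`. -/
def unanimity {n : ℕ} (S T : Finset (Fin n)) : ℝ := if S ⊆ T then 1 else 0

/-- The Möbius transform of a set function. -/
noncomputable def mobius {n : ℕ} (v : Finset (Fin n) → ℝ) (S : Finset (Fin n)) : ℝ :=
  ∑ T ∈ S.powerset, (-1 : ℝ) ^ (S.card - T.card) * v T



/-- The `k`-th tail indicator vector for the ordering `π`. -/
noncomputable def tailVec {n : ℕ} (π : Equiv.Perm (Fin n)) (k : Fin n) : Fin n → ℝ :=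
  fun i => if k ≤ π.symm i then 1 else 0

/-- Coefficient of `tailVec π k` in the decomposition of `z`. -/
noncomputable def coefL {n : ℕ} (π : Equiv.Perm (Fin n)) (hn : 0 < n) (k : Fin n)
    (z : Fin n → ℝ) : ℝ :=
  if (k : ℕ) = 0 then z (π ⟨0, hn⟩)
  else z (π k) - z (π ⟨(k : ℕ) - 1, lt_of_le_of_lt (Nat.sub_le _ _) k.isLt⟩)

lemma coefL_add {n : ℕ} (π : Equiv.Perm (Fin n)) (hn : 0 < n) (k : Fin n)
    (z w : Fin n → ℝ) : coefL π hn k (z + w) = coefL π hn k z + coefL π hn k w := by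
  simp only [coefL, Pi.add_apply]; split <;> ring

lemma coefL_smul {n : ℕ} (π : Equiv.Perm (Fin n)) (hn : 0 < n) (k : Fin n)
    (s : ℝ) (z : Fin n → ℝ) : coefL π hn k (s • z) = s * coefL π hn k z := by
  simp only [coefL, Pi.smul_apply, smul_eq_mul]; split <;> ring

/-- The candidate linear functional built from values `c k`. -/
noncomputable def Lfun {n : ℕ} (π : Equiv.Perm (Fin n)) (hn : 0 < n) (c : Fin n → ℝ) :
    (Fin n → ℝ) →ₗ[ℝ] ℝ where
  toFun z := ∑ k : Fin n, coefL π hn k z * c k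
  map_add' z w := by
    simp only [coefL_add, add_mul]; rw [Finset.sum_add_distrib]
  map_smul' s z := by
    simp only [coefL_smul, smul_eq_mul, RingHom.id_apply, Finset.mul_sum, mul_assoc]

lemma aux_lin {n : ℕ} (hn : 0 < n) (π : Equiv.Perm (Fin n)) (h : (Fin n → ℝ) → ℝ)
    (hadd : ∀ x y : Fin n → ℝ, Monotone (fun i => x (π i)) → Monotone (fun i => y (π i)) →
      h (x + y) = h x + h y)
    (hsmul : ∀ (x : Fin n → ℝ) (s : ℝ), 0 ≤ s → Monotone (fun i => x (π i)) →
      h (s • x) = s * h x) :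
    ∃ a : Fin n → ℝ, ∀ x : Fin n → ℝ, Monotone (fun i => x (π i)) →
      h x = ∑ i : Fin n, a i * x i := by
  set u : Fin n → Fin n → ℝ := tailVec π with hu_def
  have hu : ∀ k, Monotone fun i => u k (π i) := by
    intro k a b hab
    simp only [hu_def, tailVec, Equiv.symm_apply_apply]
    split_ifs with h1 h2
    · norm_num
    · exact absurd (le_trans h1 hab) h2
    · norm_num
    · norm_num
  have husmul : ∀ (s : ℝ) (k : Fin n), 0 ≤ s → Monotone fun i => (s • u k) (π i) := by
    intro s k hs
    simp only [Pi.smul_apply, smul_eq_mul]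
    exact (hu k).const_mul hs
  have hzero : h 0 = 0 := by
    have := hsmul 0 0 le_rfl monotone_const
    simpa using this
  -- additivity over finite sums of cone elements
  have hsum : ∀ (f : Fin n → Fin n → ℝ), (∀ k, Monotone fun i => f k (π i)) →
      h (∑ k : Fin n, f k) = ∑ k : Fin n, h (f k) := by
    intro f hf
    have key : ∀ s : Finset (Fin n),
        (Monotone fun i => (∑ k ∈ s, f k) (π i)) ∧ h (∑ k ∈ s, f k) = ∑ k ∈ s, h (f k) := by
      intro s
      induction s using Finset.cons_induction with
      | empty => simpa using ⟨monotone_const, hzero⟩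
      | cons a s ha ih =>
        rw [Finset.sum_cons, Finset.sum_cons]
        have hm : Monotone fun i => (f a + ∑ k ∈ s, f k) (π i) := by
          simpa [Pi.add_apply] using (hf a).add ih.1
        exact ⟨hm, by rw [hadd _ _ (hf a) ih.1, ih.2]⟩
    exact (key univ).2
  refine ⟨fun i => Lfun π hn (fun k => h (u k)) (fun j => if i = j then 1 else 0), ?_⟩
  intro x hx
  -- the main claim : h x = Lfun applied to x
  have main : h x = Lfun π hn (fun k => h (u k)) x := by
    set m : ℝ := max 0 (-(x (π ⟨0, hn⟩))) with hm_def
    have hm0 : 0 ≤ m := le_max_left _ _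
    have hmx : 0 ≤ x (π ⟨0, hn⟩) + m := by
      have := le_max_right 0 (-(x (π ⟨0, hn⟩))); linarith
    set y : Fin n → ℝ := x + m • (fun _ => (1:ℝ)) with hy_def
    have hyx : ∀ i, y i = x i + m := by
      intro i; simp [hy_def]
    have hy : Monotone fun i => y (π i) := by
      intro a b hab; simp only [hyx]
      exact add_le_add_left (hx hab) m
    set cF : Fin n → ℝ := fun k => coefL π hn k y with hcF_def
    have hcF0 : ∀ k, 0 ≤ cF k := by
      intro k
      by_cases hk : (k : ℕ) = 0
      · simp only [hcF_def, coefL, hk, if_pos]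
        rw [hyx]; exact hmx
      · simp only [hcF_def, coefL, hk, if_neg, if_false]
        have hle : (⟨(k : ℕ) - 1, lt_of_le_of_lt (Nat.sub_le _ _) k.isLt⟩ : Fin n) ≤ k := by
          simp [Fin.le_def]
        have := hy hle
        linarith [this]
    -- decomposition
    have hdecomp : y = ∑ k : Fin n, cF k • u k := by
      funext i
      rw [Finset.sum_apply]
      simp only [Pi.smul_apply, smul_eq_mul]
      set j : Fin n := π.symm i with hj_def
      have hji : π j = i := π.apply_symm_apply i
      have hjv : (j : ℕ) < n := j.isLt
      set cN : ℕ → ℝ := fun t => if ht : t < n then cF ⟨t, ht⟩ else 0 with hcN_def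
      set yN : ℕ → ℝ := fun t => if ht : t < n then y (π ⟨t, ht⟩) else 0 with hyN_def
      have step1 : ∑ k : Fin n, cF k * u k i
          = ∑ t ∈ Finset.range n, (if t ≤ (j : ℕ) then cN t else 0) := by
        rw [← Fin.sum_univ_eq_sum_range (fun t => if t ≤ (j : ℕ) then cN t else 0) n]
        refine Finset.sum_congr rfl fun k _ => ?_
        simp only [hu_def, tailVec, hcN_def]
        rw [dif_pos k.isLt]
        by_cases hkj : k ≤ j
        · rw [if_pos hkj, if_pos (by exact hkj), mul_one]
        · rw [if_neg hkj, if_neg (by exact hkj), mul_zero]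
      have step2 : ∑ t ∈ Finset.range n, (if t ≤ (j : ℕ) then cN t else 0)
          = ∑ t ∈ Finset.range ((j : ℕ) + 1), cN t := by
        rw [show (∑ t ∈ Finset.range n, if t ≤ (j : ℕ) then cN t else 0)
            = ∑ t ∈ (Finset.range n).filter (fun t => t ≤ (j : ℕ)), cN t
          from (Finset.sum_filter _ _).symm]
        congr 1
        ext t
        simp only [Finset.mem_filter, Finset.mem_range, Nat.lt_succ_iff]
        omega
      have step3 : ∑ t ∈ Finset.range ((j : ℕ) + 1), cN t = yN (j : ℕ) := by
        rw [Finset.sum_range_succ']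
        have e1 : ∀ t ∈ Finset.range (j : ℕ), cN (t + 1) = yN (t + 1) - yN t := by
          intro t ht
          rw [Finset.mem_range] at ht
          have ht1 : t + 1 < n := by omega
          have ht0 : t < n := by omega
          simp only [hcN_def, hyN_def, hcF_def, coefL]
          rw [dif_pos ht1, dif_pos ht1, dif_pos ht0, if_neg (by omega)]
          simp
        rw [Finset.sum_congr rfl e1, Finset.sum_range_sub yN]
        have e0 : cN 0 = yN 0 := by
          simp only [hcN_def, hyN_def, hcF_def, coefL]
          rw [dif_pos hn, dif_pos hn]
          simp
        rw [e0]; ring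
      rw [step1, step2, step3]
      simp only [hyN_def]
      rw [dif_pos hjv]
      have : (⟨(j : ℕ), hjv⟩ : Fin n) = j := rfl
      rw [this, hji]
    -- h of y
    have hy_val : h y = ∑ k : Fin n, cF k * h (u k) := by
      rw [hdecomp, hsum (fun k => cF k • u k) (fun k => husmul (cF k) k (hcF0 k))]
      exact Finset.sum_congr rfl fun k _ => hsmul (u k) (cF k) (hcF0 k) (hu k)
    -- h y = h x + m * h (u 0)
    have hone : (fun _ : Fin n => (1:ℝ)) = u ⟨0, hn⟩ := by
      funext i
      simp [hu_def, tailVec, Fin.le_def]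
    have hx_split : h y = h x + m * h (u ⟨0, hn⟩) := by
      rw [hy_def, hadd x (m • (fun _ => (1:ℝ))) hx (by
        simp only [Pi.smul_apply, smul_eq_mul, mul_one]; exact monotone_const)]
      rw [hone, hsmul (u ⟨0, hn⟩) m hm0 (hu _)]
    -- compare coefficients
    have hcoef : ∀ k : Fin n, cF k * h (u k)
        = coefL π hn k x * h (u k) + (if k = ⟨0, hn⟩ then m * h (u ⟨0, hn⟩) else 0) := by
      intro k
      by_cases hk : k = (⟨0, hn⟩ : Fin n)
      · subst hk
        rw [if_pos rfl]
        simp only [hcF_def, coefL, if_true]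
        rw [hyx]; ring
      · have hk' : (k : ℕ) ≠ 0 := fun h0 => hk (Fin.ext h0)
        rw [if_neg hk]
        simp only [hcF_def, coefL, if_neg hk']
        rw [hyx, hyx]; ring
    have : ∑ k : Fin n, cF k * h (u k)
        = (∑ k : Fin n, coefL π hn k x * h (u k)) + m * h (u ⟨0, hn⟩) := by
      rw [Finset.sum_congr rfl fun k _ => hcoef k, Finset.sum_add_distrib,
        Finset.sum_ite_eq' univ (⟨0, hn⟩ : Fin n) (fun _ => m * h (u ⟨0, hn⟩))]
      simp
    have hL : Lfun π hn (fun k => h (u k)) x = ∑ k : Fin n, coefL π hn k x * h (u k) := rfl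
    rw [hL]
    have := hx_split
    rw [hy_val] at this
    linarith [this.symm, ‹∑ k : Fin n, cF k * h (u k) = _›]
  rw [main, LinearMap.pi_apply_eq_sum_univ]
  exact Finset.sum_congr rfl fun i _ => by rw [smul_eq_mul, mul_comm]

section Glue
variable {n : ℕ} (g : (Fin n → ℝ) → ℝ)

lemma comono_zero (z : Fin n → ℝ) : Comonotone' z (fun _ => 0) := by
  intro i j; simp

lemma comono_of_mono (π : Equiv.Perm (Fin n)) (z w : Fin n → ℝ)
    (hz : Monotone fun i => z (π i)) (hw : Monotone fun i => w (π i)) :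
    Comonotone' z w := by
  intro i j
  rcases le_total (π.symm i) (π.symm j) with hij | hij
  · have h1 : z i ≤ z j := by simpa [π.apply_symm_apply] using hz hij
    have h2 : w i ≤ w j := by simpa [π.apply_symm_apply] using hw hij
    nlinarith
  · have h1 : z j ≤ z i := by simpa [π.apply_symm_apply] using hz hij
    have h2 : w j ≤ w i := by simpa [π.apply_symm_apply] using hw hij
    nlinarith

variable (hcomb : ∀ x x' : Fin n → ℝ, Comonotone' x x' →
      ∀ t : ℝ, 0 ≤ t → t ≤ 1 →
        g (fun i => t * x i + (1 - t) * x' i) = t * g x + (1 - t) * g x')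
include hcomb

lemma g_smul (z : Fin n → ℝ) (s : ℝ) (hs : 0 ≤ s) :
    g (s • z) = s * g z + (1 - s) * g 0 := by
  have h0 : (fun _ : Fin n => (0:ℝ)) = (0 : Fin n → ℝ) := rfl
  rcases le_or_gt s 1 with h1 | h1
  · have := hcomb z (fun _ => 0) (comono_zero z) s hs h1
    rw [h0] at this
    have e : (fun i => s * z i + (1 - s) * (0 : Fin n → ℝ) i) = s • z := by
      funext i; simp
    rw [← e]
    exact this
  · have hs0 : (0:ℝ) < s := lt_trans one_pos h1
    have := hcomb (s • z) (fun _ => 0) (comono_zero _) (1/s)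
      (by positivity) (by rw [div_le_one hs0]; linarith)
    rw [h0] at this
    have e : (fun i => (1/s) * (s • z) i + (1 - 1/s) * (0 : Fin n → ℝ) i) = z := by
      funext i; field_simp; simp
    rw [show (fun i => (1/s) * (s • z) i + (1 - 1/s) * (0:ℝ)) = z from e] at this
    field_simp at this
    nlinarith [this]

lemma g_add (z w : Fin n → ℝ) (hzw : Comonotone' z w) :
    g (z + w) = g z + g w - g 0 := by
  have h2 : Comonotone' ((2:ℝ) • z) ((2:ℝ) • w) := by
    intro i j; have := hzw i j
    simp only [Pi.smul_apply, smul_eq_mul]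
    nlinarith
  have := hcomb ((2:ℝ) • z) ((2:ℝ) • w) h2 (1/2) (by norm_num) (by norm_num)
  have e : (fun i => (1/2 : ℝ) * ((2:ℝ) • z) i + (1 - 1/2) * ((2:ℝ) • w) i) = z + w := by
    funext i; simp; ring
  rw [e] at this
  rw [g_smul g hcomb z 2 (by norm_num), g_smul g hcomb w 2 (by norm_num)] at this
  linarith

end Glue

/-- A function satisfying the affine-combination identity on
comonotonic vectors is affine on every ordering cone `P_π`, i.e., is a
Lovász extension. -/
theorem piecewiseAffine_of_affineComb {n : ℕ} (hn : 1 ≤ n)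
    (g : (Fin n → ℝ) → ℝ)
    (hcomb : ∀ x x' : Fin n → ℝ, Comonotone' x x' →
      ∀ t : ℝ, 0 ≤ t → t ≤ 1 →
        g (fun i => t * x i + (1 - t) * x' i) = t * g x + (1 - t) * g x') :
    ∀ π : Equiv.Perm (Fin n), ∃ (a : Fin n → ℝ) (c : ℝ),
      ∀ x : Fin n → ℝ, (Monotone fun i => x (π i)) →
        g x = ∑ i : Fin n, a i * x i + c := by

  intro π
  have hadd : ∀ z w : Fin n → ℝ, Monotone (fun i => z (π i)) → Monotone (fun i => w (π i)) →
      (fun v => g v - g 0) (z + w) = (fun v => g v - g 0) z + (fun v => g v - g 0) w := by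
    intro z w hz hw
    have := g_add g hcomb z w (comono_of_mono π z w hz hw)
    simp only
    linarith
  have hsmul : ∀ (z : Fin n → ℝ) (s : ℝ), 0 ≤ s → Monotone (fun i => z (π i)) →
      (fun v => g v - g 0) (s • z) = s * (fun v => g v - g 0) z := by
    intro z s hs _
    have := g_smul g hcomb z s hs
    simp only
    linarith
  obtain ⟨a, ha⟩ := aux_lin hn π (fun v => g v - g 0) hadd hsmul
  refine ⟨a, g 0, fun x hx => ?_⟩
  have := ha x hx
  try simp only at this
  linarith
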